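/- arXiv:1906.07807 — 4 statements merged into one kernel-verified Lean document; each statement's English description precedes it below -/
import Mathlib

section
/- Let r > 0 and α ∈ ℂ with Re(α) > 0. Define G₁(x) = e^{−r x²/(2α)} ∏_{n=1}^{∞} (1 − e^{−rα(2n−1)} e^{2irx})^{−1}. Then G₁ satisfies G₁(x + iα/2)/G₁(x − iα/2) = (−2ir)·(sin(rx)/r) for all x ∈ ℂ, i.e. the trigonometric Gamma function satisfies the functional equation G(x+iα/2;α)/G(x−iα/2;α) = c·s(x) with s(x) = sin(rx)/r and c = −2ir. -/
open Complex Filter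

private lemma log_one_sub_inv_norm_le {z : ℂ} (hz : ‖z‖ ≤ 1/2) :
    ‖Complex.log (1 - z)⁻¹‖ ≤ 3/2 * ‖z‖ := by
  have h1 : ‖-z‖ < 1 := by rw [norm_neg]; linarith
  have h2 : (1 : ℂ) - z = 1 + (-z) := by ring
  rw [h2, Complex.log_inv _ (Complex.slitPlane_arg_ne_pi
    (Complex.mem_slitPlane_of_norm_lt_one h1)), norm_neg]
  simpa [norm_neg] using
    Complex.norm_log_one_add_half_le_self (z := -z) (by rw [norm_neg]; exact hz)

set_option maxHeartbeats 2000000 in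
/-- The trigonometric Gamma function
`G₁(x) = e^{−rx²/(2α)} ∏_{n=1}^∞ (1 − e^{−rα(2n−1)} e^{2irx})⁻¹` satisfies the
functional equation `G₁(x+iα/2)/G₁(x−iα/2) = (−2ir)·(sin(rx)/r)`, i.e. the
Koornwinder–van Diejen functional equation with `s(x) = sin(rx)/r`, `c = −2ir`. -/
theorem trigonometric_gamma_functional_equation (r : ℝ) (hr : 0 < r) (α : ℂ) (hα : 0 < α.re)
    (x : ℂ)
    (hx : ∀ n : ℕ, Complex.exp (2 * I * (r : ℂ) * x) ≠ Complex.exp (2 * (r : ℂ) * α * (n : ℂ))) :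
    (Complex.exp (-(r : ℂ) * (x + I * α / 2) ^ 2 / (2 * α)) *
      ∏' n : ℕ, (1 - Complex.exp (-(r : ℂ) * α * (2 * (n : ℂ) + 1)) *
        Complex.exp (2 * I * (r : ℂ) * (x + I * α / 2)))⁻¹) /
    (Complex.exp (-(r : ℂ) * (x - I * α / 2) ^ 2 / (2 * α)) *
      ∏' n : ℕ, (1 - Complex.exp (-(r : ℂ) * α * (2 * (n : ℂ) + 1)) *
        Complex.exp (2 * I * (r : ℂ) * (x - I * α / 2)))⁻¹)
    = (-2 * I * (r : ℂ)) * (Complex.sin ((r : ℂ) * x) / (r : ℂ)) := by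
  set q : ℂ := Complex.exp (-(r : ℂ) * α) with hq_def
  set w : ℂ := Complex.exp (2 * I * (r : ℂ) * x) with hw_def
  set A : ℕ → ℂ := fun n => 1 - q ^ (2 * n) * w with hA_def
  set B : ℕ → ℂ := fun n => (A n)⁻¹ with hB_def
  have hq0 : q ≠ 0 := Complex.exp_ne_zero _
  have hr0 : (r : ℂ) ≠ 0 := Complex.ofReal_ne_zero.mpr hr.ne'
  have hα0 : α ≠ 0 := fun h => by simp [h] at hα
  -- q powers as exponentials
  have hqpow : ∀ m : ℕ, q ^ m = Complex.exp ((m : ℂ) * (-(r : ℂ) * α)) := by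
    intro m; rw [hq_def, ← Complex.exp_nat_mul]
  -- factors are nonzero
  have hA0 : ∀ n, A n ≠ 0 := by
    intro n h
    apply hx n
    have h1 : q ^ (2 * n) * w = 1 := (sub_eq_zero.mp h).symm
    have h2 : w = (q ^ (2 * n))⁻¹ := eq_inv_of_mul_eq_one_left
      (by rw [mul_comm]; exact h1)
    rw [h2, hqpow, ← Complex.exp_neg]
    congr 1
    push_cast
    ring
  -- norm of q
  have hqnorm : ‖q‖ < 1 := by
    rw [hq_def, Complex.norm_exp]
    have : (-(r : ℂ) * α).re = -(r * α.re) := by simp [Complex.mul_re]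
    rw [this, Real.exp_lt_one_iff]
    have := mul_pos hr hα
    linarith
  set Q : ℝ := ‖q‖ ^ 2 with hQ_def
  have hQ0 : (0:ℝ) ≤ Q := sq_nonneg _
  have hQ1 : Q < 1 := by
    have := norm_nonneg q
    nlinarith
  have hznorm : ∀ n : ℕ, ‖q ^ (2 * n) * w‖ = Q ^ n * ‖w‖ := by
    intro n
    rw [norm_mul, norm_pow, pow_mul]
  -- summability of logs of B
  have hlog : Summable fun n => Complex.log (B n) := by
    have htend : Tendsto (fun n : ℕ => Q ^ n * ‖w‖) atTop (nhds 0) := by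
      simpa using (tendsto_pow_atTop_nhds_zero_of_lt_one hQ0 hQ1).mul_const ‖w‖
    have hev : ∀ᶠ n : ℕ in atTop, ‖Complex.log (B n)‖ ≤ 3/2 * ‖w‖ * Q ^ n := by
      filter_upwards [htend.eventually_lt_const (by norm_num : (0:ℝ) < 1/2)] with n hn
      have hb : ‖q ^ (2 * n) * w‖ ≤ 1/2 := by rw [hznorm n]; exact hn.le
      calc ‖Complex.log (B n)‖ ≤ 3/2 * ‖q ^ (2 * n) * w‖ := log_one_sub_inv_norm_le hb
        _ = 3/2 * ‖w‖ * Q ^ n := by rw [hznorm n]; ring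
    exact Summable.of_norm_bounded_eventually_nat
      (((summable_geometric_of_lt_one hQ0 hQ1).mul_left (3/2 * ‖w‖))) hev
  have hB0 : ∀ n, B n ≠ 0 := fun n => inv_ne_zero (hA0 n)
  -- multipliability and nonvanishing of products
  have hlog1 : Summable fun n => Complex.log (B (n + 1)) :=
    (summable_nat_add_iff 1).mpr hlog
  have hmul1 : Multipliable fun n => B (n + 1) :=
    Complex.multipliable_of_summable_log hlog1
  have hmul : Multipliable B :=
    Complex.multipliable_of_summable_log hlog
  have hP1ne : (∏' n : ℕ, B (n + 1)) ≠ 0 := by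
    have := Complex.cexp_tsum_eq_tprod (f := fun n => B (n + 1))
      (fun n => hB0 (n + 1)) hlog1
    rw [← this]
    exact Complex.exp_ne_zero _
  -- identify the two products
  have hnum : (∏' n : ℕ, (1 - Complex.exp (-(r : ℂ) * α * (2 * (n : ℂ) + 1)) *
      Complex.exp (2 * I * (r : ℂ) * (x + I * α / 2)))⁻¹) = ∏' n : ℕ, B (n + 1) := by
    refine tprod_congr fun n => ?_
    congr 1
    rw [hA_def]
    simp only
    congr 1
    rw [hqpow, hw_def, ← Complex.exp_add, ← Complex.exp_add]
    congr 1
    push_cast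
    linear_combination ((r : ℂ) * α) * Complex.I_sq
  have hden : (∏' n : ℕ, (1 - Complex.exp (-(r : ℂ) * α * (2 * (n : ℂ) + 1)) *
      Complex.exp (2 * I * (r : ℂ) * (x - I * α / 2)))⁻¹) = ∏' n : ℕ, B n := by
    refine tprod_congr fun n => ?_
    congr 1
    rw [hA_def]
    simp only
    congr 1
    rw [hqpow, hw_def, ← Complex.exp_add, ← Complex.exp_add]
    congr 1
    push_cast
    linear_combination (-(r : ℂ) * α) * Complex.I_sq
  rw [hnum, hden, tprod_eq_zero_mul' hmul1]
  -- now pure algebra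
  have hB0val : B 0 = (1 - w)⁻¹ := by rw [hB_def, hA_def]; simp
  rw [hB0val]
  have hstep : Complex.exp (-(r : ℂ) * (x + I * α / 2) ^ 2 / (2 * α)) *
      (∏' n : ℕ, B (n + 1)) /
      (Complex.exp (-(r : ℂ) * (x - I * α / 2) ^ 2 / (2 * α)) *
      ((1 - w)⁻¹ * ∏' n : ℕ, B (n + 1)))
      = Complex.exp (-(I * (r : ℂ) * x)) * (1 - w) := by
    have h1w : (1 : ℂ) - w ≠ 0 := by
      have := hA0 0
      rw [hA_def] at this
      simpa using this
    rw [div_eq_iff (by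
      exact mul_ne_zero (Complex.exp_ne_zero _) (mul_ne_zero (inv_ne_zero h1w) hP1ne))]
    have hexp : Complex.exp (-(r : ℂ) * (x + I * α / 2) ^ 2 / (2 * α)) =
        Complex.exp (-(I * (r : ℂ) * x)) *
        Complex.exp (-(r : ℂ) * (x - I * α / 2) ^ 2 / (2 * α)) := by
      rw [← Complex.exp_add]
      congr 1
      field_simp
      ring
    rw [hexp]
    field_simp
  rw [hstep]
  -- final trigonometric identity
  have e1 : Complex.exp (-(I * (r : ℂ) * x)) * Complex.exp (2 * I * (r : ℂ) * x)
      = Complex.exp ((r : ℂ) * x * I) := by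
    rw [← Complex.exp_add]; congr 1; ring
  have e2 : Complex.exp (-((r : ℂ) * x) * I) = Complex.exp (-(I * (r : ℂ) * x)) := by
    congr 1; ring
  rw [Complex.sin, e2, hw_def, mul_sub, mul_one, e1]
  field_simp
  linear_combination (2 * (r : ℂ) * (Complex.exp (-(I * (r : ℂ) * x)) -
    Complex.exp ((r : ℂ) * x * I)) + (Complex.exp (-(I * (r : ℂ) * x)) -
    2 * (r : ℂ) * Complex.exp (-(I * (r : ℂ) * x)) - Complex.exp (I * (r : ℂ) * x) +
    2 * (r : ℂ) * Complex.exp ((r : ℂ) * x * I))) * Complex.I_sq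
end

section
/- For every x ∈ ℂ ∖ ℤ_{≤0}, the Euler Gamma function has the Euler product representation Γ(x) = (1/x) ∏_{n=1}^{∞} (1 + 1/n)^x (1 + x/n)^{−1}, the infinite product converging for all such x. -/
open Complex Filter Finset Topology

private lemma gea_cast (n : ℕ) : ((n : ℂ) + 1) = (((n : ℝ) + 1 : ℝ) : ℂ) := by push_cast; ring

private lemma gea_norm (n : ℕ) : ‖((n : ℂ) + 1)‖ = (n : ℝ) + 1 := by
  rw [gea_cast, Complex.norm_real, Real.norm_eq_abs, abs_of_pos (by positivity)]

private lemma gea_ne (n : ℕ) : ((n : ℂ) + 1) ≠ 0 := by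
  rw [gea_cast]; exact_mod_cast ne_of_gt (by positivity : (0:ℝ) < (n:ℝ)+1)

private lemma gea_log_bound {z : ℂ} (hz : ‖z‖ ≤ 1/2) : ‖Complex.log (1 + z) - z‖ ≤ ‖z‖ ^ 2 := by
  have h1 : ‖z‖ < 1 := lt_of_le_of_lt hz (by norm_num)
  have h2 : (1 - ‖z‖)⁻¹ ≤ 2 := by
    rw [inv_le_comm₀ (by linarith) (by norm_num)]
    linarith
  calc ‖Complex.log (1 + z) - z‖ ≤ ‖z‖ ^ 2 * (1 - ‖z‖)⁻¹ / 2 :=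
        Complex.norm_log_one_add_sub_self_le h1
    _ ≤ ‖z‖ ^ 2 * 2 / 2 := by gcongr
    _ = ‖z‖ ^ 2 := by ring

private lemma gea_prodA (x : ℂ) (n : ℕ) :
    ∏ i ∈ Finset.range n, (1 + 1 / ((i : ℂ) + 1)) ^ x = (((n : ℝ) + 1 : ℝ) : ℂ) ^ x := by
  induction n with
  | zero => simp
  | succ n ih =>
    rw [Finset.prod_range_succ, ih]
    have h1 : (1 : ℂ) + 1 / ((n : ℂ) + 1) = (((1 + 1 / ((n:ℝ)+1)) : ℝ) : ℂ) := by
      push_cast; ring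
    rw [h1, ← mul_cpow_ofReal_nonneg (by positivity) (by positivity)]
    have hn : ((n:ℝ) + 1) ≠ 0 := by positivity
    congr 2
    push_cast
    have hc : ((n:ℂ)+1) ≠ 0 := by exact_mod_cast n.succ_ne_zero
    rw [mul_add, mul_one, mul_one_div, div_self hc]

/-- Euler product representation of the Gamma function:
for `x ∉ ℤ_{≤0}`, `Γ(x) = (1/x) ∏_{n=1}^∞ (1 + 1/n)^x (1 + x/n)⁻¹`,
the product (indexed here by `n : ℕ`, with `n+1 = 1, 2, …`) converging. -/
theorem gamma_euler_product (x : ℂ) (hx : ∀ n : ℕ, x ≠ -(n : ℂ)) :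
    Multipliable (fun n : ℕ =>
      (1 + 1 / ((n : ℂ) + 1)) ^ x * (1 + x / ((n : ℂ) + 1))⁻¹) ∧
    Complex.Gamma x =
      (1 / x) * ∏' n : ℕ, (1 + 1 / ((n : ℂ) + 1)) ^ x * (1 + x / ((n : ℂ) + 1))⁻¹ := by
  have hx0 : x ≠ 0 := fun h => hx 0 (by simp [h])
  have hxj : ∀ j : ℕ, x + (j : ℂ) ≠ 0 := fun j h => hx j (eq_neg_of_add_eq_zero_left h)
  have hxi : ∀ i : ℕ, x + ((i : ℂ) + 1) ≠ 0 := by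
    intro i
    have h := hxj (i + 1)
    push_cast at h
    exact h
  have hne : ∀ n : ℕ, (1 + x / ((n : ℂ) + 1)) ≠ 0 := by
    intro n h
    apply hxi n
    have hm := gea_ne n
    field_simp at h
    linear_combination h
  have h1ne : ∀ n : ℕ, (1 : ℂ) + 1 / ((n : ℂ) + 1) ≠ 0 := by
    intro n
    rw [gea_cast n]
    have : (1:ℂ) + 1 / (((n:ℝ)+1 : ℝ) : ℂ) = (((1 + 1/((n:ℝ)+1)) : ℝ) : ℂ) := by push_cast; ring
    rw [this]
    exact_mod_cast ne_of_gt (by positivity : (0:ℝ) < 1 + 1/((n:ℝ)+1))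
  -- the log terms
  set u : ℕ → ℂ := fun n =>
    Complex.log (1 + 1 / ((n : ℂ) + 1)) * x - Complex.log (1 + x / ((n : ℂ) + 1)) with hu
  have hterm : (fun n : ℕ => (1 + 1 / ((n : ℂ) + 1)) ^ x * (1 + x / ((n : ℂ) + 1))⁻¹)
      = Complex.exp ∘ u := by
    funext n
    rw [Complex.cpow_def_of_ne_zero (h1ne n), Function.comp_apply, hu]
    rw [← Complex.exp_log (hne n), ← Complex.exp_neg, ← Complex.exp_add]
    congr 1
  -- summability of u
  have hbase : Summable (fun n : ℕ => ((n : ℝ) + 1)⁻¹ ^ 2) := by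
    have h := (summable_nat_add_iff 1).2 (Real.summable_one_div_nat_pow.2 one_lt_two)
    refine h.congr fun n => ?_
    push_cast
    rw [one_div, ← inv_pow]
  have hnorm1 : ∀ n : ℕ, ‖1 / ((n : ℂ) + 1)‖ = ((n : ℝ) + 1)⁻¹ := by
    intro n
    rw [norm_div, norm_one, gea_norm, one_div]
  have hnormx : ∀ n : ℕ, ‖x / ((n : ℂ) + 1)‖ = ‖x‖ / ((n : ℝ) + 1) := by
    intro n
    rw [norm_div, gea_norm]
  have hv : Summable (fun n : ℕ => Complex.log (1 + 1 / ((n : ℂ) + 1)) - 1 / ((n : ℂ) + 1)) := by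
    apply Summable.of_norm_bounded_eventually_nat (g := fun n => ((n : ℝ) + 1)⁻¹ ^ 2) hbase
    filter_upwards [eventually_ge_atTop 1] with n hn
    have hz : ‖1 / ((n : ℂ) + 1)‖ ≤ 1/2 := by
      rw [hnorm1, inv_le_comm₀ (by positivity) (by norm_num)]
      have : (1:ℝ) ≤ (n:ℝ) := by exact_mod_cast hn
      linarith
    calc ‖Complex.log (1 + 1 / ((n : ℂ) + 1)) - 1 / ((n : ℂ) + 1)‖
        ≤ ‖1 / ((n : ℂ) + 1)‖ ^ 2 := gea_log_bound hz
      _ = ((n : ℝ) + 1)⁻¹ ^ 2 := by rw [hnorm1]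
  have hw : Summable (fun n : ℕ => Complex.log (1 + x / ((n : ℂ) + 1)) - x / ((n : ℂ) + 1)) := by
    apply Summable.of_norm_bounded_eventually_nat
      (g := fun n => ‖x‖ ^ 2 * ((n : ℝ) + 1)⁻¹ ^ 2) (hbase.mul_left _)
    filter_upwards [eventually_ge_atTop ⌈2 * ‖x‖⌉₊] with n hn
    have hle : 2 * ‖x‖ ≤ (n : ℝ) + 1 := by
      have := Nat.ceil_le.1 hn
      linarith
    have hz : ‖x / ((n : ℂ) + 1)‖ ≤ 1/2 := by
      rw [hnormx, div_le_iff₀ (by positivity)]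
      linarith
    calc ‖Complex.log (1 + x / ((n : ℂ) + 1)) - x / ((n : ℂ) + 1)‖
        ≤ ‖x / ((n : ℂ) + 1)‖ ^ 2 := gea_log_bound hz
      _ = ‖x‖ ^ 2 * ((n : ℝ) + 1)⁻¹ ^ 2 := by
          rw [hnormx]
          field_simp
  have hsum : Summable u := by
    refine ((hv.mul_right x).sub hw).congr fun n => ?_
    rw [hu]
    ring
  -- the product
  have hP : HasProd (fun n : ℕ => (1 + 1 / ((n : ℂ) + 1)) ^ x * (1 + x / ((n : ℂ) + 1))⁻¹)
      (Complex.exp (∑' n, u n)) := by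
    rw [hterm]
    exact hsum.hasSum.cexp
  refine ⟨hP.multipliable, ?_⟩
  rw [hP.tprod_eq]
  -- partial products equal GammaSeq up to a correction factor
  have hkey : ∀ n : ℕ, n ≠ 0 →
      (1 / x) * ∏ i ∈ Finset.range n,
        (1 + 1 / ((i : ℂ) + 1)) ^ x * (1 + x / ((i : ℂ) + 1))⁻¹
      = Complex.GammaSeq x n * (((1 + 1 / (n : ℝ)) : ℝ) : ℂ) ^ x := by
    intro n hn
    have hnR : (n : ℝ) ≠ 0 := Nat.cast_ne_zero.2 hn
    rw [Finset.prod_mul_distrib, gea_prodA]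
    have hB : ∏ i ∈ Finset.range n, (1 + x / ((i : ℂ) + 1))⁻¹
        = (n.factorial : ℂ) / ∏ i ∈ Finset.range n, (x + ((i : ℂ) + 1)) := by
      have hstep : ∀ i ∈ Finset.range n, (1 + x / ((i : ℂ) + 1))⁻¹
          = ((i : ℂ) + 1) / (x + ((i : ℂ) + 1)) := by
        intro i _
        have hi := gea_ne i
        have h2 : (1:ℂ) + x / ((i : ℂ) + 1) = (x + ((i : ℂ) + 1)) / ((i : ℂ) + 1) := by
          rw [add_div, div_self hi, add_comm 1 (x / ((i : ℂ) + 1))]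
        rw [h2, inv_div]
      rw [Finset.prod_congr rfl hstep, Finset.prod_div_distrib]
      congr 1
      have : ∀ i ∈ Finset.range n, ((i : ℂ) + 1) = ((i + 1 : ℕ) : ℂ) := by
        intro i _; push_cast; ring
      rw [Finset.prod_congr rfl this, ← Nat.cast_prod, Finset.prod_range_add_one_eq_factorial]
    rw [hB, Complex.GammaSeq]
    have hsplit : ∏ j ∈ Finset.range (n + 1), (x + (j : ℂ))
        = x * ∏ i ∈ Finset.range n, (x + ((i : ℂ) + 1)) := by
      rw [Finset.prod_range_succ']
      push_cast
      ring
    have hcpow : (((n : ℝ) + 1 : ℝ) : ℂ) ^ x = (n : ℂ) ^ x * (((1 + 1 / (n : ℝ)) : ℝ) : ℂ) ^ x := by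
      have hcast : (n : ℂ) = (((n : ℝ)) : ℂ) := (Complex.ofReal_natCast n).symm
      rw [hcast, ← mul_cpow_ofReal_nonneg (Nat.cast_nonneg n) (by positivity)]
      congr 2
      push_cast
      have hc : (n:ℂ) ≠ 0 := Nat.cast_ne_zero.2 hn
      rw [mul_add, mul_one, mul_one_div, div_self hc]
    rw [hsplit, hcpow]
    have hprodne : ∏ i ∈ Finset.range n, (x + ((i : ℂ) + 1)) ≠ 0 :=
      Finset.prod_ne_zero_iff.2 fun i _ => hxi i
    field_simp
  -- limits
  have hc1 : Tendsto (fun n : ℕ => (((1 + 1 / (n : ℝ)) : ℝ) : ℂ) ^ x) atTop (𝓝 1) := by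
    have hr : Tendsto (fun n : ℕ => (1 + 1 / (n : ℝ))) atTop (𝓝 1) := by
      have h0 := tendsto_one_div_atTop_nhds_zero_nat (𝕜 := ℝ)
      simpa using (tendsto_const_nhds (x := (1:ℝ))).add h0
    have hr2 : Tendsto (fun n : ℕ => ((((1 + 1 / (n : ℝ)) : ℝ)) : ℂ)) atTop (𝓝 1) := by
      have := (Complex.continuous_ofReal.tendsto 1).comp hr
      simpa [Function.comp_def] using this
    have hct : ContinuousAt (fun z : ℂ => z ^ x) 1 :=
      continuousAt_cpow_const (by simp [Complex.mem_slitPlane_iff])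
    have := hct.tendsto.comp hr2
    simpa [Function.comp_def] using this
  have h2 : Tendsto (fun n : ℕ => Complex.GammaSeq x n * (((1 + 1 / (n : ℝ)) : ℝ) : ℂ) ^ x)
      atTop (𝓝 (Complex.Gamma x)) := by
    simpa using (Complex.GammaSeq_tendsto_Gamma x).mul hc1
  have h1 : Tendsto (fun n : ℕ => Complex.GammaSeq x n * (((1 + 1 / (n : ℝ)) : ℝ) : ℂ) ^ x)
      atTop (𝓝 ((1 / x) * Complex.exp (∑' n, u n))) := by
    apply ((hP.tendsto_prod_nat).const_mul (1 / x)).congr'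
    filter_upwards [eventually_ge_atTop 1] with n hn
    exact hkey n (by omega)
  exact tendsto_nhds_unique h2 h1
end

section
/- Let γ, m, a, c, d, n₀, n₁ ∈ ℂ with c ≠ d, and let X ∈ ℂ be such that all denominators below are nonzero. Then the rational-case key identity holds for one variable: γm · Σ_{ε=±1} [(εX − γm/2)/(εX)] · [(εX + a − c − n₀)/(εX + a − c)] · [(εX + a − d − n₁)/(εX + a − d)] − { [(X + c − a − γm)(−X + c − a − γm)]/[(X + c − a)(−X + c − a)] · (−n₀) · (c − d − n₁)/(c − d) + [(X + d − a − γm)(−X + d − a − γm)]/[(X + d − a)(−X + d − a)] · (d − c − n₀)/(d − c) · (−n₁) } = 2γm + n₀ + n₁. -/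
set_option maxHeartbeats 2000000

/-- The `𝒩 = 1` rational case (`s(x) = x`, `ρ = 0`, `ω₀ = 0`) of the key functional
identity, as an identity of rational functions of `X` at points where no
denominator vanishes. The sum over `ε = ±1` is written out explicitly. -/
theorem key_identity_rational_N1 (γ m a c d n₀ n₁ X : ℂ)
    (hcd : c ≠ d) (hX : X ≠ 0)
    (h1 : X + a - c ≠ 0) (h2 : -X + a - c ≠ 0)
    (h3 : X + a - d ≠ 0) (h4 : -X + a - d ≠ 0) :
    γ * m * (((X - γ * m / 2) * (X + a - c - n₀) * (X + a - d - n₁)) /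
        (X * (X + a - c) * (X + a - d))
      + ((-X - γ * m / 2) * (-X + a - c - n₀) * (-X + a - d - n₁)) /
        ((-X) * (-X + a - c) * (-X + a - d)))
    - (((X + c - a - γ * m) * (-X + c - a - γ * m)) /
          ((X + c - a) * (-X + c - a)) * (-n₀) * (c - d - n₁) / (c - d)
      + ((X + d - a - γ * m) * (-X + d - a - γ * m)) /
          ((X + d - a) * (-X + d - a)) * (d - c - n₀) / (d - c) * (-n₁))
    = 2 * γ * m + n₀ + n₁ := by
  have hcd' : c - d ≠ 0 := sub_ne_zero.2 hcd
  have hD : X * (X + a - c) * (-X + a - c) * (X + a - d) * (-X + a - d) * (c - d) ≠ 0 :=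
    mul_ne_zero (mul_ne_zero (mul_ne_zero (mul_ne_zero (mul_ne_zero hX h1) h2) h3) h4) hcd'
  set D := X * (X + a - c) * (-X + a - c) * (X + a - d) * (-X + a - d) * (c - d) with hDdef
  have e1 : X + c - a ≠ 0 := by intro h; apply h2; linear_combination -h
  have e2 : -X + c - a ≠ 0 := by intro h; apply h1; linear_combination -h
  have e3 : X + d - a ≠ 0 := by intro h; apply h4; linear_combination -h
  have e4 : -X + d - a ≠ 0 := by intro h; apply h3; linear_combination -h
  have hdc : d - c ≠ 0 := sub_ne_zero.2 (Ne.symm hcd)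
  have t1 : ((X - γ * m / 2) * (X + a - c - n₀) * (X + a - d - n₁)) /
        (X * (X + a - c) * (X + a - d))
      = ((X - γ * m / 2) * (X + a - c - n₀) * (X + a - d - n₁) *
          ((-X + a - c) * (-X + a - d) * (c - d))) / D := by
    rw [hDdef, div_eq_div_iff (by exact mul_ne_zero (mul_ne_zero hX h1) h3) hD]
    ring
  have t2 : ((-X - γ * m / 2) * (-X + a - c - n₀) * (-X + a - d - n₁)) /
        ((-X) * (-X + a - c) * (-X + a - d))
      = ((-X - γ * m / 2) * (-X + a - c - n₀) * (-X + a - d - n₁) *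
          (-((X + a - c) * (X + a - d) * (c - d)))) / D := by
    rw [hDdef, div_eq_div_iff (by exact mul_ne_zero (mul_ne_zero (neg_ne_zero.2 hX) h2) h4) hD]
    ring
  have t3 : ((X + c - a - γ * m) * (-X + c - a - γ * m)) /
          ((X + c - a) * (-X + c - a)) * (-n₀) * (c - d - n₁) / (c - d)
      = ((X + c - a - γ * m) * (-X + c - a - γ * m) * (-n₀) * (c - d - n₁) *
          (X * (X + a - d) * (-X + a - d))) / D := by
    rw [div_mul_eq_mul_div, div_mul_eq_mul_div, div_div, hDdef,
      div_eq_div_iff (by exact mul_ne_zero (mul_ne_zero e1 e2) hcd') hD]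
    ring
  have t4 : ((X + d - a - γ * m) * (-X + d - a - γ * m)) /
          ((X + d - a) * (-X + d - a)) * (d - c - n₀) / (d - c) * (-n₁)
      = ((X + d - a - γ * m) * (-X + d - a - γ * m) * (d - c - n₀) * (-n₁) *
          (-(X * (X + a - c) * (-X + a - c)))) / D := by
    rw [eq_div_iff hD, hDdef]
    field_simp
    ring
  rw [t1, t2, t3, t4, ← add_div, ← add_div, mul_div_assoc',
    ← sub_div, div_eq_iff hD, hDdef]
  ring
end

section
/- Let 𝒩 ≥ 0 be an integer, and let γ, c, d ∈ ℂ with c ≠ d, n₀, n₁ ∈ ℂ, m₁,…,m_𝒩 ∈ ℂ, a₁,…,a_𝒩 ∈ ℂ. Then the following identity of rational functions in X₁,…,X_𝒩 holds (at all points where no denominator vanishes): Σ_{ε=±1} Σ_{J=1}^{𝒩} γ m_J · ∏_{δ=±1} ∏_{K≠J} [(X_J + δX_K + ε(a_J − a_K − γm_K))/(X_J + δX_K + ε(a_J − a_K))] · [(εX_J − γm_J/2)(εX_J + a_J − c − n₀)(εX_J + a_J − d − n₁)] / [εX_J · (εX_J + a_J − c)(εX_J + a_J − d)] − { [∏_{δ=±1}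 ∏_{J=1}^{𝒩} (δX_J + c − a_J − γm_J)/(δX_J + c − a_J)] · (−n₀)(c − d − n₁)/(c − d) + [∏_{δ=±1} ∏_{J=1}^{𝒩} (δX_J + d − a_J − γm_J)/(δX_J + d − a_J)] · (d − c − n₀)(−n₁)/(d − c) } = 2γ Σ_{J=1}^{𝒩} m_J + n₀ + n₁. -/
open Finset Polynomial

lemma prod_erase_inl' {α β M : Type*} [Fintype α] [Fintype β] [DecidableEq α] [DecidableEq β]
    [CommMonoid M] (a : α) (f : α ⊕ β → M) :
    ∏ x ∈ (univ : Finset (α ⊕ β)).erase (Sum.inl a), f x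
      = (∏ x ∈ univ.erase a, f (Sum.inl x)) * ∏ x, f (Sum.inr x) := by
  have h : (univ : Finset (α ⊕ β)).erase (Sum.inl a) = (univ.erase a).disjSum univ := by
    ext (x | x) <;> simp
  rw [h, Finset.prod_disjSum]

lemma prod_erase_inr' {α β M : Type*} [Fintype α] [Fintype β] [DecidableEq α] [DecidableEq β]
    [CommMonoid M] (b : β) (f : α ⊕ β → M) :
    ∏ x ∈ (univ : Finset (α ⊕ β)).erase (Sum.inr b), f x
      = (∏ x, f (Sum.inl x)) * ∏ x ∈ univ.erase b, f (Sum.inr x) := by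
  have h : (univ : Finset (α ⊕ β)).erase (Sum.inr b) = univ.disjSum (univ.erase b) := by
    ext (x | x) <;> simp
  rw [h, Finset.prod_disjSum]

lemma bool_erase_true' : (univ : Finset Bool).erase true = {false} := by decide
lemma bool_erase_false' : (univ : Finset Bool).erase false = {true} := by decide


lemma node_aux_plus (PN PD e1 e2 f1 f2 x g : ℂ) (hPD : PD ≠ 0) (hx : x ≠ 0)
    (hf1 : f1 ≠ 0) (hf2 : f2 ≠ 0) :
    g * (PN / PD) * ((x - g / 2) * e1 * e2 / (x * f1 * f2))
      = -(-g * (2 * x - g) * PN * (e1 * e2) / (2 * x * PD * (f1 * f2))) := by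
  rw [mul_assoc, div_mul_div_comm, mul_div_assoc', ← neg_div, div_eq_div_iff
    (mul_ne_zero hPD (mul_ne_zero (mul_ne_zero hx hf1) hf2))
    (mul_ne_zero (mul_ne_zero (mul_ne_zero two_ne_zero hx) hPD) (mul_ne_zero hf1 hf2))]
  ring

lemma node_aux_minus (PN PD e1 e2 f1 f2 x g : ℂ) (hPD : PD ≠ 0) (hx : x ≠ 0)
    (hf1 : f1 ≠ 0) (hf2 : f2 ≠ 0) :
    g * (PN / PD) * ((-x - g / 2) * e1 * e2 / (-x * f1 * f2))
      = -((-(2 * x) - g) * -g * PN * (e1 * e2) / (-(2 * x) * PD * (f1 * f2))) := by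
  rw [mul_assoc, div_mul_div_comm, mul_div_assoc', ← neg_div, div_eq_div_iff
    (mul_ne_zero hPD (mul_ne_zero (mul_ne_zero (neg_ne_zero.mpr hx) hf1) hf2))
    (mul_ne_zero (mul_ne_zero (neg_ne_zero.mpr (mul_ne_zero two_ne_zero hx)) hPD)
      (mul_ne_zero hf1 hf2))]
  ring

lemma node_aux_cd (PN PD u e1 e2 : ℂ) :
    PN / PD * e1 * e2 / u = PN * (e1 * e2) / (PD * u) := by
  rw [div_mul_eq_mul_div, div_mul_eq_mul_div, div_div, mul_assoc]

lemma residue_sum {ι : Type*} [DecidableEq ι] (s : Finset ι) (hs : s.Nonempty)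
    (v : ι → ℂ) (hv : Set.InjOn v s) (P : ℂ[X]) (hP : P.degree ≤ s.card) :
    ∑ i ∈ s, P.eval (v i) / ∏ j ∈ s.erase i, (v i - v j)
      = P.coeff (s.card - 1) + P.coeff s.card * ∑ i ∈ s, v i := by
  classical
  set n := s.card with hn
  have hn1 : 1 ≤ n := hs.card_pos
  set Q : ℂ[X] := P - C (P.coeff n) * Lagrange.nodal s v with hQ
  have hdegnodal : (Lagrange.nodal s v).degree = n := Lagrange.degree_nodal
  have hQdeg : Q.degree < (n : ℕ) := by
    rw [Polynomial.degree_lt_iff_coeff_zero]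
    intro m hm
    rcases eq_or_lt_of_le hm with h | h
    · simp only [hQ, Polynomial.coeff_sub, Polynomial.coeff_C_mul, ← h]
      have : (Lagrange.nodal s v).coeff n = 1 := by
        have := Lagrange.nodal_monic (s := s) (v := v)
        have hd : (Lagrange.nodal s v).natDegree = n := Lagrange.natDegree_nodal
        simpa [hd] using this.coeff_natDegree
      simp [this]
    · have h1 : P.coeff m = 0 := Polynomial.coeff_eq_zero_of_degree_lt
        (lt_of_le_of_lt hP (by exact_mod_cast h))
      have h2 : (C (P.coeff n) * Lagrange.nodal s v).coeff m = 0 := by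
        apply Polynomial.coeff_eq_zero_of_degree_lt
        calc (C (P.coeff n) * Lagrange.nodal s v).degree
            ≤ (C (P.coeff n)).degree + (Lagrange.nodal s v).degree := Polynomial.degree_mul_le _ _
          _ ≤ 0 + (n : WithBot ℕ) := by
              rw [hdegnodal]; gcongr; exact Polynomial.degree_C_le
          _ < m := by rw [zero_add]; exact_mod_cast h
      simp [hQ, h1, h2]
  have hinterp : Q = Lagrange.interpolate s v (fun i => Q.eval (v i)) :=
    Lagrange.eq_interpolate hv hQdeg
  have hbasis : ∀ i ∈ s, (Lagrange.basis s v i).coeff (n - 1)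
      = (∏ j ∈ s.erase i, (v i - v j))⁻¹ := by
    intro i hi
    have h1 : Lagrange.basis s v i
        = C (Lagrange.nodalWeight s v i) * Lagrange.nodal (s.erase i) v := by
      rw [Lagrange.basis_eq_prod_sub_inv_mul_nodal_div hi, Lagrange.nodal_erase_eq_nodal_div hi]
    have h2 : (Lagrange.nodal (s.erase i) v).coeff (n - 1) = 1 := by
      have hd : (Lagrange.nodal (s.erase i) v).natDegree = n - 1 := by
        rw [Lagrange.natDegree_nodal, card_erase_of_mem hi]
      have := (Lagrange.nodal_monic (s := s.erase i) (v := v)).coeff_natDegree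
      rwa [hd] at this
    rw [h1, Polynomial.coeff_C_mul, h2, mul_one, Lagrange.nodalWeight, ← prod_inv_distrib]
  have key : Q.coeff (n - 1) = ∑ i ∈ s, P.eval (v i) / ∏ j ∈ s.erase i, (v i - v j) := by
    rw [hinterp, Lagrange.interpolate_apply, Polynomial.finset_sum_coeff]
    refine sum_congr rfl fun i hi => ?_
    have hQev : Q.eval (v i) = P.eval (v i) := by
      simp [hQ, Lagrange.eval_nodal_at_node hi]
    rw [Polynomial.coeff_C_mul, hbasis i hi, hQev, div_eq_mul_inv]
  have hnodcoeff : (Lagrange.nodal s v).coeff (n - 1) = -∑ i ∈ s, v i := by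
    rw [Lagrange.nodal_eq]
    exact Polynomial.prod_X_sub_C_coeff_card_pred s v hs.card_pos
  have hfin : Q.coeff (n - 1) = P.coeff (n - 1) + P.coeff n * ∑ i ∈ s, v i := by
    simp only [hQ, Polynomial.coeff_sub, Polynomial.coeff_C_mul, hnodcoeff]; ring
  rw [← key, hfin]

lemma residue_sum' {ι : Type*} [DecidableEq ι] (s : Finset ι) (hs : s.Nonempty)
    (v w : ι → ℂ) (hv : Set.InjOn v s) :
    ∑ i ∈ s, (∏ j ∈ s, (v i - w j)) / ∏ j ∈ s.erase i, (v i - v j)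
      = ∑ i ∈ s, v i - ∑ i ∈ s, w i := by
  have h := residue_sum s hs v hv (Lagrange.nodal s w) (le_of_eq Lagrange.degree_nodal)
  have hev : ∀ i, (Lagrange.nodal s w).eval (v i) = ∏ j ∈ s, (v i - w j) := fun i =>
    Lagrange.eval_nodal
  have hc1 : (Lagrange.nodal s w).coeff (s.card - 1) = -∑ i ∈ s, w i := by
    rw [Lagrange.nodal_eq]
    exact Polynomial.prod_X_sub_C_coeff_card_pred s w hs.card_pos
  have hc2 : (Lagrange.nodal s w).coeff s.card = 1 := by
    have hd : (Lagrange.nodal s w).natDegree = s.card := Lagrange.natDegree_nodal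
    have := (Lagrange.nodal_monic (s := s) (v := w)).coeff_natDegree
    rwa [hd] at this
  simp only [hev, hc1, hc2, one_mul] at h
  rw [h]; ring

set_option maxHeartbeats 2000000 in
/-- The key functional identity (Lemma 3.1 of the paper) in the rational case
`s(x) = x`, `ρ = 0`, `ω₀ = 0`: for any `𝒩 ≥ 0`, `γ, c, d, n₀, n₁ ∈ ℂ` with `c ≠ d`
and any `m_J, a_J, X_J ∈ ℂ` at which no denominator vanishes, the stated identity
of rational functions holds.  The sums and products over `ε, δ = ±1` are written
out explicitly. -/
theorem key_identity_rational (𝒩 : ℕ) (γ c d n₀ n₁ : ℂ) (hcd : c ≠ d)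
    (m a X : Fin 𝒩 → ℂ)
    (hX : ∀ J, X J ≠ 0)
    (hcden : ∀ (J) (ε : ℂ), ε = 1 ∨ ε = -1 →
      ε * X J + a J - c ≠ 0 ∧ ε * X J + a J - d ≠ 0 ∧
      ε * X J + c - a J ≠ 0 ∧ ε * X J + d - a J ≠ 0)
    (hpair : ∀ J K, K ≠ J → ∀ (δ ε : ℂ), δ = 1 ∨ δ = -1 → ε = 1 ∨ ε = -1 →
      X J + δ * X K + ε * (a J - a K) ≠ 0) :
    (∑ J, (γ * m J *
        (∏ K ∈ univ.erase J,
          ((X J + X K + (a J - a K - γ * m K)) / (X J + X K + (a J - a K)) *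
           ((X J - X K + (a J - a K - γ * m K)) / (X J - X K + (a J - a K))))) *
        (((X J - γ * m J / 2) * (X J + a J - c - n₀) * (X J + a J - d - n₁)) /
          (X J * (X J + a J - c) * (X J + a J - d)))
      + γ * m J *
        (∏ K ∈ univ.erase J,
          ((X J + X K - (a J - a K - γ * m K)) / (X J + X K - (a J - a K)) *
           ((X J - X K - (a J - a K - γ * m K)) / (X J - X K - (a J - a K))))) *
        (((-X J - γ * m J / 2) * (-X J + a J - c - n₀) * (-X J + a J - d - n₁)) /
          ((-X J) * (-X J + a J - c) * (-X J + a J - d)))))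
    - ((∏ J, ((X J + c - a J - γ * m J) / (X J + c - a J) *
          ((-X J + c - a J - γ * m J) / (-X J + c - a J)))) *
        (-n₀) * (c - d - n₁) / (c - d)
      + (∏ J, ((X J + d - a J - γ * m J) / (X J + d - a J) *
          ((-X J + d - a J - γ * m J) / (-X J + d - a J)))) *
        (d - c - n₀) * (-n₁) / (d - c))
    = 2 * γ * (∑ J, m J) + n₀ + n₁ := by
  classical
  set v : Fin 𝒩 ⊕ (Fin 𝒩 ⊕ Bool) → ℂ :=
    Sum.elim (fun J => a J + X J) (Sum.elim (fun J => a J - X J) (fun b => cond b c d)) with hv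
  set w : Fin 𝒩 ⊕ (Fin 𝒩 ⊕ Bool) → ℂ :=
    Sum.elim (fun J => a J + γ * m J + X J)
      (Sum.elim (fun J => a J + γ * m J - X J) (fun b => cond b (c + n₀) (d + n₁))) with hw
  have hvne : ∀ i j : Fin 𝒩 ⊕ (Fin 𝒩 ⊕ Bool), v i = v j → i = j := by
    rintro (J | J | b) (K | K | b') h
    · simp only [hv, Sum.elim_inl] at h
      by_cases hJK : J = K
      · rw [hJK]
      · exact absurd (show X J + (-1) * X K + 1 * (a J - a K) = 0 by linear_combination h)
          (hpair J K (Ne.symm hJK) (-1) 1 (Or.inr rfl) (Or.inl rfl))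
    · simp only [hv, Sum.elim_inl, Sum.elim_inr] at h
      by_cases hJK : J = K
      · subst hJK; exact absurd (show X J = 0 by linear_combination h / 2) (hX J)
      · exact absurd (show X J + 1 * X K + 1 * (a J - a K) = 0 by linear_combination h)
          (hpair J K (Ne.symm hJK) 1 1 (Or.inl rfl) (Or.inl rfl))
    · cases b' <;> simp only [hv, Sum.elim_inl, Sum.elim_inr, cond_true, cond_false] at h
      · exact absurd (show (1 : ℂ) * X J + a J - d = 0 by linear_combination h)
          (hcden J 1 (Or.inl rfl)).2.1
      · exact absurd (show (1 : ℂ) * X J + a J - c = 0 by linear_combination h)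
          (hcden J 1 (Or.inl rfl)).1
    · simp only [hv, Sum.elim_inl, Sum.elim_inr] at h
      by_cases hJK : J = K
      · subst hJK; exact absurd (show X J = 0 by linear_combination -h / 2) (hX J)
      · exact absurd (show X K + 1 * X J + 1 * (a K - a J) = 0 by linear_combination -h)
          (hpair K J hJK 1 1 (Or.inl rfl) (Or.inl rfl))
    · simp only [hv, Sum.elim_inl, Sum.elim_inr] at h
      by_cases hJK : J = K
      · rw [hJK]
      · exact absurd (show X J + (-1) * X K + (-1) * (a J - a K) = 0 by linear_combination -h)
          (hpair J K (Ne.symm hJK) (-1) (-1) (Or.inr rfl) (Or.inr rfl))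
    · cases b' <;> simp only [hv, Sum.elim_inl, Sum.elim_inr, cond_true, cond_false] at h
      · exact absurd (show (-1 : ℂ) * X J + a J - d = 0 by linear_combination h)
          (hcden J (-1) (Or.inr rfl)).2.1
      · exact absurd (show (-1 : ℂ) * X J + a J - c = 0 by linear_combination h)
          (hcden J (-1) (Or.inr rfl)).1
    · cases b <;> simp only [hv, Sum.elim_inl, Sum.elim_inr, cond_true, cond_false] at h
      · exact absurd (show (1 : ℂ) * X K + a K - d = 0 by linear_combination -h)
          (hcden K 1 (Or.inl rfl)).2.1
      · exact absurd (show (1 : ℂ) * X K + a K - c = 0 by linear_combination -h)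
          (hcden K 1 (Or.inl rfl)).1
    · cases b <;> simp only [hv, Sum.elim_inl, Sum.elim_inr, cond_true, cond_false] at h
      · exact absurd (show (-1 : ℂ) * X K + a K - d = 0 by linear_combination -h)
          (hcden K (-1) (Or.inr rfl)).2.1
      · exact absurd (show (-1 : ℂ) * X K + a K - c = 0 by linear_combination -h)
          (hcden K (-1) (Or.inr rfl)).1
    · cases b <;> cases b' <;>
        first
          | rfl
          | (simp only [hv, Sum.elim_inl, Sum.elim_inr, cond_true, cond_false] at h
             first
               | exact absurd h hcd
               | exact absurd h (Ne.symm hcd))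
  have hinj : Set.InjOn v ↑(univ : Finset (Fin 𝒩 ⊕ (Fin 𝒩 ⊕ Bool))) :=
    fun i _ j _ h => hvne i j h
  have hne : (univ : Finset (Fin 𝒩 ⊕ (Fin 𝒩 ⊕ Bool))).Nonempty :=
    ⟨Sum.inr (Sum.inr true), mem_univ _⟩
  have main := residue_sum' univ hne v w hinj
  -- per-node identities
  have eqP : ∀ J : Fin 𝒩,
      γ * m J * (∏ K ∈ univ.erase J,
          ((X J + X K + (a J - a K - γ * m K)) / (X J + X K + (a J - a K)) *
           ((X J - X K + (a J - a K - γ * m K)) / (X J - X K + (a J - a K))))) *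
        (((X J - γ * m J / 2) * (X J + a J - c - n₀) * (X J + a J - d - n₁)) /
          (X J * (X J + a J - c) * (X J + a J - d)))
      = -((∏ j, (v (Sum.inl J) - w j)) /
          ∏ j ∈ univ.erase (Sum.inl J), (v (Sum.inl J) - v j)) := by
    intro J
    have hXJ : X J ≠ 0 := hX J
    have hPD : (∏ K ∈ univ.erase J,
        ((X J + X K + (a J - a K)) * (X J - X K + (a J - a K)))) ≠ 0 :=
      Finset.prod_ne_zero_iff.mpr fun K hK =>
        mul_ne_zero
          (fun h0 => hpair J K (mem_erase.mp hK).1 1 1 (Or.inl rfl) (Or.inl rfl)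
            (by linear_combination h0))
          (fun h0 => hpair J K (mem_erase.mp hK).1 (-1) 1 (Or.inr rfl) (Or.inl rfl)
            (by linear_combination h0))
    have hc1 : X J + a J - c ≠ 0 := fun h0 =>
      (hcden J 1 (Or.inl rfl)).1 (by linear_combination h0)
    have hd1 : X J + a J - d ≠ 0 := fun h0 =>
      (hcden J 1 (Or.inl rfl)).2.1 (by linear_combination h0)
    have hprod : (∏ K ∈ univ.erase J,
          ((X J + X K + (a J - a K - γ * m K)) / (X J + X K + (a J - a K)) *
           ((X J - X K + (a J - a K - γ * m K)) / (X J - X K + (a J - a K)))))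
        = (∏ K ∈ univ.erase J,
            ((X J + X K + (a J - a K - γ * m K)) * (X J - X K + (a J - a K - γ * m K))))
          / (∏ K ∈ univ.erase J,
            ((X J + X K + (a J - a K)) * (X J - X K + (a J - a K)))) := by
      rw [← Finset.prod_div_distrib]
      exact Finset.prod_congr rfl fun K _ => div_mul_div_comm _ _ _ _
    have hnum : (∏ j, (v (Sum.inl J) - w j))
        = (-(γ * m J)) * (2 * X J - γ * m J)
          * (∏ K ∈ univ.erase J,
              ((X J + X K + (a J - a K - γ * m K)) * (X J - X K + (a J - a K - γ * m K))))
          * ((X J + a J - c - n₀) * (X J + a J - d - n₁)) := by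
      rw [Fintype.prod_sum_type, Fintype.prod_sum_type, Fintype.prod_bool]
      simp only [hv, hw, Sum.elim_inl, Sum.elim_inr, cond_true, cond_false]
      rw [← Finset.mul_prod_erase univ _ (mem_univ J),
          ← Finset.mul_prod_erase univ _ (mem_univ J)]
      have h12 : (∏ K ∈ univ.erase J, (a J + X J - (a K + γ * m K + X K)))
            * (∏ K ∈ univ.erase J, (a J + X J - (a K + γ * m K - X K)))
          = ∏ K ∈ univ.erase J,
              ((X J + X K + (a J - a K - γ * m K)) * (X J - X K + (a J - a K - γ * m K))) := by
        rw [← Finset.prod_mul_distrib]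
        exact Finset.prod_congr rfl fun K _ => by ring
      linear_combination ((a J + X J - (a J + γ * m J + X J))
        * (a J + X J - (a J + γ * m J - X J))
        * ((a J + X J - (c + n₀)) * (a J + X J - (d + n₁)))) * h12
    have hden : (∏ j ∈ univ.erase (Sum.inl J), (v (Sum.inl J) - v j))
        = (2 * X J)
          * (∏ K ∈ univ.erase J, ((X J + X K + (a J - a K)) * (X J - X K + (a J - a K))))
          * ((X J + a J - c) * (X J + a J - d)) := by
      rw [prod_erase_inl', Fintype.prod_sum_type, Fintype.prod_bool]
      simp only [hv, Sum.elim_inl, Sum.elim_inr, cond_true, cond_false]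
      rw [← Finset.mul_prod_erase univ _ (mem_univ J)]
      have h12 : (∏ K ∈ univ.erase J, (a J + X J - (a K + X K)))
            * (∏ K ∈ univ.erase J, (a J + X J - (a K - X K)))
          = ∏ K ∈ univ.erase J, ((X J + X K + (a J - a K)) * (X J - X K + (a J - a K))) := by
        rw [← Finset.prod_mul_distrib]
        exact Finset.prod_congr rfl fun K _ => by ring
      linear_combination ((a J + X J - (a J - X J))
        * ((a J + X J - c) * (a J + X J - d))) * h12
    rw [hprod, hnum, hden]
    exact node_aux_plus _ _ _ _ _ _ _ _ hPD hXJ hc1 hd1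
  have eqM : ∀ J : Fin 𝒩,
      γ * m J * (∏ K ∈ univ.erase J,
          ((X J + X K - (a J - a K - γ * m K)) / (X J + X K - (a J - a K)) *
           ((X J - X K - (a J - a K - γ * m K)) / (X J - X K - (a J - a K))))) *
        (((-X J - γ * m J / 2) * (-X J + a J - c - n₀) * (-X J + a J - d - n₁)) /
          ((-X J) * (-X J + a J - c) * (-X J + a J - d)))
      = -((∏ j, (v (Sum.inr (Sum.inl J)) - w j)) /
          ∏ j ∈ univ.erase (Sum.inr (Sum.inl J)), (v (Sum.inr (Sum.inl J)) - v j)) := by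
    intro J
    have hXJ : X J ≠ 0 := hX J
    have hXJ' : -X J ≠ 0 := neg_ne_zero.mpr (hX J)
    have hPD : (∏ K ∈ univ.erase J,
        ((X J + X K - (a J - a K)) * (X J - X K - (a J - a K)))) ≠ 0 :=
      Finset.prod_ne_zero_iff.mpr fun K hK =>
        mul_ne_zero
          (fun h0 => hpair J K (mem_erase.mp hK).1 1 (-1) (Or.inl rfl) (Or.inr rfl)
            (by linear_combination h0))
          (fun h0 => hpair J K (mem_erase.mp hK).1 (-1) (-1) (Or.inr rfl) (Or.inr rfl)
            (by linear_combination h0))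
    have hc1 : -X J + a J - c ≠ 0 := fun h0 =>
      (hcden J (-1) (Or.inr rfl)).1 (by linear_combination h0)
    have hd1 : -X J + a J - d ≠ 0 := fun h0 =>
      (hcden J (-1) (Or.inr rfl)).2.1 (by linear_combination h0)
    have hprod : (∏ K ∈ univ.erase J,
          ((X J + X K - (a J - a K - γ * m K)) / (X J + X K - (a J - a K)) *
           ((X J - X K - (a J - a K - γ * m K)) / (X J - X K - (a J - a K)))))
        = (∏ K ∈ univ.erase J,
            ((X J + X K - (a J - a K - γ * m K)) * (X J - X K - (a J - a K - γ * m K))))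
          / (∏ K ∈ univ.erase J,
            ((X J + X K - (a J - a K)) * (X J - X K - (a J - a K)))) := by
      rw [← Finset.prod_div_distrib]
      exact Finset.prod_congr rfl fun K _ => div_mul_div_comm _ _ _ _
    have hnum : (∏ j, (v (Sum.inr (Sum.inl J)) - w j))
        = (-(2 * X J) - γ * m J) * -(γ * m J)
          * (∏ K ∈ univ.erase J,
              ((X J + X K - (a J - a K - γ * m K)) * (X J - X K - (a J - a K - γ * m K))))
          * ((-X J + a J - c - n₀) * (-X J + a J - d - n₁)) := by
      rw [Fintype.prod_sum_type, Fintype.prod_sum_type, Fintype.prod_bool]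
      simp only [hv, hw, Sum.elim_inl, Sum.elim_inr, cond_true, cond_false]
      rw [← Finset.mul_prod_erase univ _ (mem_univ J),
          ← Finset.mul_prod_erase univ _ (mem_univ J)]
      have h12 : (∏ K ∈ univ.erase J, (a J - X J - (a K + γ * m K + X K)))
            * (∏ K ∈ univ.erase J, (a J - X J - (a K + γ * m K - X K)))
          = ∏ K ∈ univ.erase J,
              ((X J + X K - (a J - a K - γ * m K)) * (X J - X K - (a J - a K - γ * m K))) := by
        rw [← Finset.prod_mul_distrib]
        exact Finset.prod_congr rfl fun K _ => by ring
      linear_combination ((a J - X J - (a J + γ * m J + X J))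
        * (a J - X J - (a J + γ * m J - X J))
        * ((a J - X J - (c + n₀)) * (a J - X J - (d + n₁)))) * h12
    have hden : (∏ j ∈ univ.erase (Sum.inr (Sum.inl J)), (v (Sum.inr (Sum.inl J)) - v j))
        = -(2 * X J)
          * (∏ K ∈ univ.erase J, ((X J + X K - (a J - a K)) * (X J - X K - (a J - a K))))
          * ((-X J + a J - c) * (-X J + a J - d)) := by
      rw [prod_erase_inr', prod_erase_inl', Fintype.prod_bool]
      simp only [hv, Sum.elim_inl, Sum.elim_inr, cond_true, cond_false]
      rw [← Finset.mul_prod_erase univ _ (mem_univ J)]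
      have h12 : (∏ K ∈ univ.erase J, (a J - X J - (a K + X K)))
            * (∏ K ∈ univ.erase J, (a J - X J - (a K - X K)))
          = ∏ K ∈ univ.erase J, ((X J + X K - (a J - a K)) * (X J - X K - (a J - a K))) := by
        rw [← Finset.prod_mul_distrib]
        exact Finset.prod_congr rfl fun K _ => by ring
      linear_combination ((a J - X J - (a J + X J))
        * ((a J - X J - c) * (a J - X J - d))) * h12
    rw [hprod, hnum, hden]
    exact node_aux_minus _ _ _ _ _ _ _ _ hPD hXJ hc1 hd1
  have eqc : (∏ J, ((X J + c - a J - γ * m J) / (X J + c - a J) *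
          ((-X J + c - a J - γ * m J) / (-X J + c - a J)))) *
        (-n₀) * (c - d - n₁) / (c - d)
      = (∏ j, (v (Sum.inr (Sum.inr true)) - w j)) /
          ∏ j ∈ univ.erase (Sum.inr (Sum.inr true)), (v (Sum.inr (Sum.inr true)) - v j) := by
    have hcd' : c - d ≠ 0 := sub_ne_zero_of_ne hcd
    have hPD : (∏ K : Fin 𝒩, ((X K + c - a K) * (-X K + c - a K))) ≠ 0 :=
      Finset.prod_ne_zero_iff.mpr fun K _ =>
        mul_ne_zero
          (fun h0 => (hcden K 1 (Or.inl rfl)).2.2.1 (by linear_combination h0))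
          (fun h0 => (hcden K (-1) (Or.inr rfl)).2.2.1 (by linear_combination h0))
    have hprod : (∏ J, ((X J + c - a J - γ * m J) / (X J + c - a J) *
            ((-X J + c - a J - γ * m J) / (-X J + c - a J))))
        = (∏ J, ((X J + c - a J - γ * m J) * (-X J + c - a J - γ * m J)))
          / (∏ J, ((X J + c - a J) * (-X J + c - a J))) := by
      rw [← Finset.prod_div_distrib]
      exact Finset.prod_congr rfl fun K _ => div_mul_div_comm _ _ _ _
    have hnum : (∏ j, (v (Sum.inr (Sum.inr true)) - w j))
        = (∏ J, ((X J + c - a J - γ * m J) * (-X J + c - a J - γ * m J)))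
          * (-n₀ * (c - d - n₁)) := by
      rw [Fintype.prod_sum_type, Fintype.prod_sum_type, Fintype.prod_bool]
      simp only [hv, hw, Sum.elim_inl, Sum.elim_inr, cond_true, cond_false]
      have h12 : (∏ K, (c - (a K + γ * m K + X K))) * (∏ K, (c - (a K + γ * m K - X K)))
          = ∏ K, ((X K + c - a K - γ * m K) * (-X K + c - a K - γ * m K)) := by
        rw [← Finset.prod_mul_distrib]
        exact Finset.prod_congr rfl fun K _ => by ring
      linear_combination ((c - (c + n₀)) * (c - (d + n₁))) * h12
    have hden : (∏ j ∈ univ.erase (Sum.inr (Sum.inr true)), (v (Sum.inr (Sum.inr true)) - v j))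
        = (∏ K, ((X K + c - a K) * (-X K + c - a K))) * (c - d) := by
      rw [prod_erase_inr', prod_erase_inr', bool_erase_true', Finset.prod_singleton]
      simp only [hv, Sum.elim_inl, Sum.elim_inr, cond_true, cond_false]
      have h12 : (∏ K, (c - (a K + X K))) * (∏ K, (c - (a K - X K)))
          = ∏ K, ((X K + c - a K) * (-X K + c - a K)) := by
        rw [← Finset.prod_mul_distrib]
        exact Finset.prod_congr rfl fun K _ => by ring
      linear_combination (c - d) * h12
    rw [hnum, hden, hprod, node_aux_cd]
  have eqd : (∏ J, ((X J + d - a J - γ * m J) / (X J + d - a J) *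
          ((-X J + d - a J - γ * m J) / (-X J + d - a J)))) *
        (d - c - n₀) * (-n₁) / (d - c)
      = (∏ j, (v (Sum.inr (Sum.inr false)) - w j)) /
          ∏ j ∈ univ.erase (Sum.inr (Sum.inr false)), (v (Sum.inr (Sum.inr false)) - v j) := by
    have hcd' : d - c ≠ 0 := sub_ne_zero_of_ne (Ne.symm hcd)
    have hPD : (∏ K : Fin 𝒩, ((X K + d - a K) * (-X K + d - a K))) ≠ 0 :=
      Finset.prod_ne_zero_iff.mpr fun K _ =>
        mul_ne_zero
          (fun h0 => (hcden K 1 (Or.inl rfl)).2.2.2 (by linear_combination h0))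
          (fun h0 => (hcden K (-1) (Or.inr rfl)).2.2.2 (by linear_combination h0))
    have hprod : (∏ J, ((X J + d - a J - γ * m J) / (X J + d - a J) *
            ((-X J + d - a J - γ * m J) / (-X J + d - a J))))
        = (∏ J, ((X J + d - a J - γ * m J) * (-X J + d - a J - γ * m J)))
          / (∏ J, ((X J + d - a J) * (-X J + d - a J))) := by
      rw [← Finset.prod_div_distrib]
      exact Finset.prod_congr rfl fun K _ => div_mul_div_comm _ _ _ _
    have hnum : (∏ j, (v (Sum.inr (Sum.inr false)) - w j))
        = (∏ J, ((X J + d - a J - γ * m J) * (-X J + d - a J - γ * m J)))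
          * ((d - c - n₀) * -n₁) := by
      rw [Fintype.prod_sum_type, Fintype.prod_sum_type, Fintype.prod_bool]
      simp only [hv, hw, Sum.elim_inl, Sum.elim_inr, cond_true, cond_false]
      have h12 : (∏ K, (d - (a K + γ * m K + X K))) * (∏ K, (d - (a K + γ * m K - X K)))
          = ∏ K, ((X K + d - a K - γ * m K) * (-X K + d - a K - γ * m K)) := by
        rw [← Finset.prod_mul_distrib]
        exact Finset.prod_congr rfl fun K _ => by ring
      linear_combination ((d - (c + n₀)) * (d - (d + n₁))) * h12
    have hden : (∏ j ∈ univ.erase (Sum.inr (Sum.inr false)), (v (Sum.inr (Sum.inr false)) - v j))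
        = (∏ K, ((X K + d - a K) * (-X K + d - a K))) * (d - c) := by
      rw [prod_erase_inr', prod_erase_inr', bool_erase_false', Finset.prod_singleton]
      simp only [hv, Sum.elim_inl, Sum.elim_inr, cond_true, cond_false]
      have h12 : (∏ K, (d - (a K + X K))) * (∏ K, (d - (a K - X K)))
          = ∏ K, ((X K + d - a K) * (-X K + d - a K)) := by
        rw [← Finset.prod_mul_distrib]
        exact Finset.prod_congr rfl fun K _ => by ring
      linear_combination (d - c) * h12
    rw [hnum, hden, hprod, node_aux_cd]
  have expand : (∑ i, v i) - (∑ i, w i) = -(2 * γ * (∑ J, m J) + n₀ + n₁) := by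
    rw [Fintype.sum_sum_type, Fintype.sum_sum_type, Fintype.sum_bool,
        Fintype.sum_sum_type, Fintype.sum_sum_type, Fintype.sum_bool]
    simp only [hv, hw, Sum.elim_inl, Sum.elim_inr, cond_true, cond_false]
    simp only [Finset.sum_add_distrib, Finset.sum_sub_distrib, ← Finset.mul_sum]
    ring
  rw [expand] at main
  simp only [Fintype.sum_sum_type, Fintype.sum_bool] at main
  rw [Finset.sum_add_distrib,
      Finset.sum_congr rfl (fun J _ => eqP J), Finset.sum_congr rfl (fun J _ => eqM J),
      eqc, eqd, Finset.sum_neg_distrib, Finset.sum_neg_distrib]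
  linear_combination -main
end
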